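/- Let G be a finite simple graph and v ∈ ker(G). Then ker(G) \ {v} is a critical independent set of the graph G − v, and d_c(G − v) = d_c(G) − 1. -/

import Mathlib

open Finset

namespace CritGraph

variable {V : Type*} [Fintype V] [DecidableEq V]

/-- The neighborhood of a set of vertices `X`:
all vertices having at least one neighbor in `X`. -/
def nbhd (G : SimpleGraph V) [DecidableRel G.Adj] (X : Finset V) : Finset V :=
  univ.filter fun v => ∃ x ∈ X, G.Adj v x

/-- The difference `d(X) = |X| - |N(X)|` of a set of vertices `X`. -/
def diff (G : SimpleGraph V) [DecidableRel G.Adj] (X : Finset V) : ℤ :=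
  (X.card : ℤ) - ((nbhd G X).card : ℤ)

/-- A set of vertices is independent if no two of its vertices are adjacent. -/
def IsIndep (G : SimpleGraph V) (S : Finset V) : Prop :=
  ∀ u ∈ S, ∀ v ∈ S, ¬ G.Adj u v

instance (G : SimpleGraph V) [DecidableRel G.Adj] : DecidablePred (IsIndep G) := fun S =>
  inferInstanceAs (Decidable (∀ u ∈ S, ∀ v ∈ S, ¬ G.Adj u v))

/-- The critical difference `d_c(G) = max {d(X) : X ⊆ V}`. -/
def dC (G : SimpleGraph V) [DecidableRel G.Adj] : ℤ :=
  (univ : Finset V).powerset.sup' (Finset.powerset_nonempty _) (diff G)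

/-- The critical independence difference `id_c(G) = max {d(I) : I independent}`. -/
def idC (G : SimpleGraph V) [DecidableRel G.Adj] : ℤ :=
  ((univ : Finset V).powerset.filter (IsIndep G)).sup'
    ⟨∅, by simp [IsIndep]⟩ (diff G)

/-- `A` is a critical independent set: `A` is independent and
`d(A) = max {d(I) : I independent}`. -/
def IsCritIndep (G : SimpleGraph V) [DecidableRel G.Adj] (A : Finset V) : Prop :=
  IsIndep G A ∧ ∀ I : Finset V, IsIndep G I → diff G I ≤ diff G A

instance (G : SimpleGraph V) [DecidableRel G.Adj] : DecidablePred (IsCritIndep G) := fun A =>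
  inferInstanceAs (Decidable (IsIndep G A ∧ ∀ I : Finset V, IsIndep G I → diff G I ≤ diff G A))

/-- `ker(G)`: the intersection of all critical independent sets of `G`. -/
def kerG (G : SimpleGraph V) [DecidableRel G.Adj] : Finset V :=
  univ.filter fun v => ∀ A : Finset V, IsCritIndep G A → v ∈ A

/-- `G - v`: the induced subgraph of `G` on `V \ {v}`. -/
def deleteVert (G : SimpleGraph V) (v : V) : SimpleGraph {u : V // u ≠ v} :=
  G.comap Subtype.val

instance (G : SimpleGraph V) (v : V) [DecidableRel G.Adj] :
    DecidableRel (deleteVert G v).Adj := fun a b =>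
  inferInstanceAs (Decidable (G.Adj a.val b.val))

/-- `S` is an inclusion-minimal independent set with positive difference. -/
def MinPosIndep (G : SimpleGraph V) [DecidableRel G.Adj] (S : Finset V) : Prop :=
  IsIndep G S ∧ 0 < diff G S ∧ ∀ S' ⊂ S, ¬ (IsIndep G S' ∧ 0 < diff G S')

/-- `S` is a maximum independent set. -/
def IsMaxIndep (G : SimpleGraph V) (S : Finset V) : Prop :=
  IsIndep G S ∧ ∀ I : Finset V, IsIndep G I → I.card ≤ S.card

instance (G : SimpleGraph V) [DecidableRel G.Adj] : DecidablePred (IsMaxIndep G) := fun S =>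
  inferInstanceAs (Decidable (IsIndep G S ∧ ∀ I : Finset V, IsIndep G I → I.card ≤ S.card))

/-- `core(G)`: the intersection of all maximum independent sets of `G`. -/
def coreG (G : SimpleGraph V) [DecidableRel G.Adj] : Finset V :=
  univ.filter fun v => ∀ A : Finset V, IsMaxIndep G A → v ∈ A


section Lemmas

variable {G : SimpleGraph V} [DecidableRel G.Adj]

lemma mem_nbhd {X : Finset V} {u : V} : u ∈ nbhd G X ↔ ∃ x ∈ X, G.Adj u x := by
  simp [nbhd]

lemma nbhd_mono {X Y : Finset V} (h : X ⊆ Y) : nbhd G X ⊆ nbhd G Y := by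
  intro u hu
  rw [mem_nbhd] at hu ⊢
  obtain ⟨x, hx, hadj⟩ := hu
  exact ⟨x, h hx, hadj⟩

lemma nbhd_union (X Y : Finset V) : nbhd G (X ∪ Y) = nbhd G X ∪ nbhd G Y := by
  ext u
  simp only [mem_nbhd, mem_union]
  constructor
  · rintro ⟨x, hx | hx, hadj⟩
    · exact Or.inl ⟨x, hx, hadj⟩
    · exact Or.inr ⟨x, hx, hadj⟩
  · rintro (⟨x, hx, hadj⟩ | ⟨x, hx, hadj⟩)
    · exact ⟨x, Or.inl hx, hadj⟩
    · exact ⟨x, Or.inr hx, hadj⟩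

lemma diff_supermod (X Y : Finset V) :
    diff G X + diff G Y ≤ diff G (X ∪ Y) + diff G (X ∩ Y) := by
  have h1 : (X ∪ Y).card + (X ∩ Y).card = X.card + Y.card :=
    card_union_add_card_inter X Y
  have h2 : (nbhd G (X ∪ Y)).card + (nbhd G (X ∩ Y)).card
      ≤ (nbhd G X).card + (nbhd G Y).card := by
    have hsub : nbhd G (X ∩ Y) ⊆ nbhd G X ∩ nbhd G Y :=
      subset_inter (nbhd_mono inter_subset_left) (nbhd_mono inter_subset_right)
    calc (nbhd G (X ∪ Y)).card + (nbhd G (X ∩ Y)).card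
        ≤ (nbhd G X ∪ nbhd G Y).card + (nbhd G X ∩ nbhd G Y).card := by
          rw [nbhd_union]
          exact Nat.add_le_add_left (card_le_card hsub) _
      _ = (nbhd G X).card + (nbhd G Y).card := card_union_add_card_inter _ _
  unfold diff
  push_cast
  omega

lemma IsIndep.subset {S T : Finset V} (hT : IsIndep G T) (h : S ⊆ T) : IsIndep G S :=
  fun u hu w hw => hT u (h hu) w (h hw)

lemma shrink_indep (X : Finset V) : IsIndep G (X \ nbhd G X) := by
  intro u hu w hw hadj
  rw [mem_sdiff] at hu hw
  exact hw.2 (mem_nbhd.mpr ⟨u, hu.1, hadj.symm⟩)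

lemma shrink_diff (X : Finset V) : diff G X ≤ diff G (X \ nbhd G X) := by
  have hcard : (X \ nbhd G X).card + (X ∩ nbhd G X).card = X.card :=
    card_sdiff_add_card_inter X (nbhd G X)
  have hNB : nbhd G (X \ nbhd G X) ∪ (X ∩ nbhd G X) ⊆ nbhd G X :=
    union_subset (nbhd_mono sdiff_subset) inter_subset_right
  have hdisj : Disjoint (nbhd G (X \ nbhd G X)) (X ∩ nbhd G X) := by
    rw [disjoint_right]
    intro z hz hzN
    rw [mem_nbhd] at hzN
    obtain ⟨b, hb, hadj⟩ := hzN
    rw [mem_sdiff] at hb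
    exact hb.2 (mem_nbhd.mpr ⟨z, (mem_inter.mp hz).1, hadj.symm⟩)
  have hle : (nbhd G (X \ nbhd G X)).card + (X ∩ nbhd G X).card ≤ (nbhd G X).card := by
    rw [← card_union_of_disjoint hdisj]
    exact card_le_card hNB
  unfold diff
  push_cast
  omega

lemma diff_le_dC (X : Finset V) : diff G X ≤ dC G :=
  le_sup' _ (mem_powerset.mpr (subset_univ X))

lemma exists_diff_eq_dC : ∃ X : Finset V, diff G X = dC G := by
  obtain ⟨X, -, hX⟩ := exists_mem_eq_sup' (powerset_nonempty (univ : Finset V)) (diff G)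
  exact ⟨X, hX.symm⟩

lemma diff_le_idC {I : Finset V} (hI : IsIndep G I) : diff G I ≤ idC G :=
  le_sup' _ (mem_filter.mpr ⟨mem_powerset.mpr (subset_univ I), hI⟩)

lemma exists_critIndep : ∃ A : Finset V, IsCritIndep G A := by
  obtain ⟨A, hA, hEq⟩ := exists_mem_eq_sup'
    (⟨∅, by simp [IsIndep]⟩ : ((univ : Finset V).powerset.filter (IsIndep G)).Nonempty) (diff G)
  refine ⟨A, (mem_filter.mp hA).2, fun I hI => ?_⟩
  exact (diff_le_idC hI).trans hEq.le

lemma IsCritIndep.diff_eq_idC {A : Finset V} (hA : IsCritIndep G A) : diff G A = idC G := by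
  refine le_antisymm (diff_le_idC hA.1) (sup'_le _ _ fun I hI => hA.2 I (mem_filter.mp hI).2)

lemma idC_eq_dC : idC G = dC G := by
  refine le_antisymm (sup'_le _ _ fun I _ => diff_le_dC I) ?_
  obtain ⟨X, hX⟩ := exists_diff_eq_dC (G := G)
  calc dC G = diff G X := hX.symm
    _ ≤ diff G (X \ nbhd G X) := shrink_diff X
    _ ≤ idC G := diff_le_idC (shrink_indep X)

lemma IsCritIndep.diff_eq_dC {A : Finset V} (hA : IsCritIndep G A) : diff G A = dC G :=
  hA.diff_eq_idC.trans idC_eq_dC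

lemma isCritIndep_of_dC_le {A : Finset V} (hA : IsIndep G A) (h : dC G ≤ diff G A) :
    IsCritIndep G A :=
  ⟨hA, fun I _ => (diff_le_dC I).trans h⟩

lemma IsCritIndep.inter {A B : Finset V} (hA : IsCritIndep G A) (hB : IsCritIndep G B) :
    IsCritIndep G (A ∩ B) := by
  have hAd : diff G A = dC G := hA.diff_eq_dC
  have hBd : diff G B = dC G := hB.diff_eq_dC
  have hsup := diff_supermod (G := G) A B
  have hU : diff G (A ∪ B) ≤ dC G := diff_le_dC _
  exact isCritIndep_of_dC_le (hA.1.subset inter_subset_left) (by omega)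

lemma mem_inf'_finsets {𝒮 : Finset (Finset V)} (hne : 𝒮.Nonempty) {v : V} :
    v ∈ 𝒮.inf' hne id ↔ ∀ A ∈ 𝒮, v ∈ A := by
  induction hne using Finset.Nonempty.cons_induction with
  | singleton A => simp
  | cons A s hA hs ih => simp [inf'_cons, ih]

lemma inf'_critIndep : ∀ (𝒮 : Finset (Finset V)) (hne : 𝒮.Nonempty),
    (∀ A ∈ 𝒮, IsCritIndep G A) → IsCritIndep G (𝒮.inf' hne id) := by
  intro 𝒮 hne
  induction hne using Finset.Nonempty.cons_induction with
  | singleton A => intro h; simpa using h A (by simp)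
  | cons A s hA hs ih =>
      intro h
      rw [inf'_cons hs]
      exact IsCritIndep.inter (h A (by simp)) (ih fun B hB => h B (by simp [hB]))

lemma mem_kerG_iff {v : V} : v ∈ kerG G ↔ ∀ A : Finset V, IsCritIndep G A → v ∈ A := by
  simp [kerG]

lemma kerG_critIndep : IsCritIndep G (kerG G) := by
  classical
  obtain ⟨A₀, hA₀⟩ := exists_critIndep (G := G)
  have hne : ((univ : Finset V).powerset.filter (IsCritIndep G)).Nonempty :=
    ⟨A₀, mem_filter.mpr ⟨mem_powerset.mpr (subset_univ _), hA₀⟩⟩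
  have hker : kerG G = ((univ : Finset V).powerset.filter (IsCritIndep G)).inf' hne id := by
    ext u
    rw [mem_kerG_iff, mem_inf'_finsets hne]
    constructor
    · intro h A hA
      exact h A (mem_filter.mp hA).2
    · intro h A hA
      exact h A (mem_filter.mpr ⟨mem_powerset.mpr (subset_univ _), hA⟩)
  rw [hker]
  exact inf'_critIndep _ hne fun A hA => (mem_filter.mp hA).2

lemma key_bound {v : V} (hv : v ∈ kerG G) {I : Finset V} (hI : IsIndep G I) (hvI : v ∉ I) :
    (v ∉ nbhd G I → diff G I ≤ dC G - 1) ∧ (v ∈ nbhd G I → diff G I ≤ dC G - 2) := by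
  have hmem : ∀ A : Finset V, IsCritIndep G A → v ∈ A := mem_kerG_iff.mp hv
  have hIle : diff G I ≤ dC G := diff_le_dC I
  constructor
  · intro _
    by_contra h
    push_neg at h
    have heq : dC G ≤ diff G I := by omega
    exact hvI (hmem I (isCritIndep_of_dC_le hI heq))
  · intro hvN
    by_contra h
    push_neg at h
    have hIge : dC G - 1 ≤ diff G I := by omega
    have hKc : IsCritIndep G (kerG G) := kerG_critIndep
    have hKd : diff G (kerG G) = dC G := hKc.diff_eq_dC
    by_cases hcase : dC G ≤ diff G (I ∩ kerG G)
    · have hcrit : IsCritIndep G (I ∩ kerG G) :=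
        isCritIndep_of_dC_le (hI.subset inter_subset_left) hcase
      exact hvI (mem_inter.mp (hmem _ hcrit)).1
    · push_neg at hcase
      have hsup := diff_supermod (G := G) I (kerG G)
      have hUeq : dC G ≤ diff G (I ∪ kerG G) := by omega
      have hBc : IsCritIndep G ((I ∪ kerG G) \ nbhd G (I ∪ kerG G)) :=
        isCritIndep_of_dC_le (shrink_indep _) (hUeq.trans (shrink_diff _))
      have hvB := hmem _ hBc
      rw [mem_sdiff] at hvB
      exact hvB.2 (nbhd_mono subset_union_left hvN)

variable {v : V}

lemma image_val_indep {I : Finset {u : V // u ≠ v}} (hI : IsIndep (deleteVert G v) I) :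
    IsIndep G (I.image Subtype.val) := by
  intro a ha b hb hadj
  obtain ⟨a', ha', rfl⟩ := mem_image.mp ha
  obtain ⟨b', hb', rfl⟩ := mem_image.mp hb
  exact hI a' ha' b' hb' hadj

lemma nbhd_delete (S : Finset {u : V // u ≠ v}) :
    (nbhd (deleteVert G v) S).image Subtype.val = (nbhd G (S.image Subtype.val)).erase v := by
  ext u
  constructor
  · intro hu
    obtain ⟨u', hu', rfl⟩ := mem_image.mp hu
    obtain ⟨x, hx, hadj⟩ := mem_nbhd.mp hu'
    exact mem_erase.mpr ⟨u'.2, mem_nbhd.mpr ⟨x.val, mem_image_of_mem _ hx, hadj⟩⟩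
  · intro hu
    rw [mem_erase] at hu
    obtain ⟨x, hx, hadj⟩ := mem_nbhd.mp hu.2
    obtain ⟨x', hx', rfl⟩ := mem_image.mp hx
    exact mem_image.mpr ⟨⟨u, hu.1⟩, mem_nbhd.mpr ⟨x', hx', hadj⟩, rfl⟩

lemma diff_delete (S : Finset {u : V // u ≠ v}) :
    diff (deleteVert G v) S
      = ((S.image Subtype.val).card : ℤ)
        - (((nbhd G (S.image Subtype.val)).erase v).card : ℤ) := by
  have h1 : S.card = (S.image Subtype.val).card :=
    (card_image_of_injective _ Subtype.val_injective).symm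
  have h2 : (nbhd (deleteVert G v) S).card = ((nbhd G (S.image Subtype.val)).erase v).card := by
    rw [← nbhd_delete (G := G) S, card_image_of_injective _ Subtype.val_injective]
  unfold diff
  rw [h1, h2]

end Lemmas

/-- If `v ∈ ker(G)`, then `ker(G) \ {v}` is a critical independent set of `G - v`,
and `d_c(G - v) = d_c(G) - 1`. -/
theorem kerG_erase_critIndep_of_deleteVert (G : SimpleGraph V) [DecidableRel G.Adj]
    (v : V) (hv : v ∈ kerG G) :
    IsCritIndep (deleteVert G v) ((kerG G).subtype fun u => u ≠ v) ∧
      dC (deleteVert G v) = dC G - 1 := by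
  classical
  have hKc : IsCritIndep G (kerG G) := kerG_critIndep
  have hKd : diff G (kerG G) = dC G := hKc.diff_eq_dC
  have hvK : v ∈ kerG G := hv
  have hK'img : ((kerG G).subtype fun u => u ≠ v).image Subtype.val = (kerG G).erase v := by
    ext u
    constructor
    · intro hu
      obtain ⟨a, ha, rfl⟩ := mem_image.mp hu
      exact mem_erase.mpr ⟨a.2, mem_subtype.mp ha⟩
    · intro hu
      rw [mem_erase] at hu
      exact mem_image.mpr ⟨⟨u, hu.1⟩, mem_subtype.mpr hu.2, rfl⟩
  have hK'indep : IsIndep (deleteVert G v) ((kerG G).subtype fun u => u ≠ v) := by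
    intro a ha b hb hadj
    exact hKc.1 a.val (mem_subtype.mp ha) b.val (mem_subtype.mp hb) hadj
  have hlow : dC G - 1 ≤ diff (deleteVert G v) ((kerG G).subtype fun u => u ≠ v) := by
    rw [diff_delete, hK'img]
    have hc : ((kerG G).erase v).card = (kerG G).card - 1 := card_erase_of_mem hvK
    have hKpos : 1 ≤ (kerG G).card := card_pos.mpr ⟨v, hvK⟩
    have hsub : (nbhd G ((kerG G).erase v)).erase v ⊆ nbhd G (kerG G) :=
      (erase_subset _ _).trans (nbhd_mono (erase_subset _ _))
    have hcard : ((nbhd G ((kerG G).erase v)).erase v).card ≤ (nbhd G (kerG G)).card :=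
      card_le_card hsub
    unfold diff at hKd
    omega
  have hup : dC (deleteVert G v) ≤ dC G - 1 := by
    obtain ⟨X, hX⟩ := exists_diff_eq_dC (G := deleteVert G v)
    have hBi : IsIndep (deleteVert G v) (X \ nbhd (deleteVert G v) X) := shrink_indep X
    have hBd : dC (deleteVert G v) ≤ diff (deleteVert G v) (X \ nbhd (deleteVert G v) X) :=
      hX ▸ shrink_diff X
    set B₀ := (X \ nbhd (deleteVert G v) X).image Subtype.val with hB₀
    have hB₀i : IsIndep G B₀ := image_val_indep hBi
    have hvB₀ : v ∉ B₀ := by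
      intro h
      obtain ⟨b, -, hbv⟩ := mem_image.mp h
      exact b.2 hbv
    have hkey := key_bound (v := v) hv hB₀i hvB₀
    rw [diff_delete] at hBd
    rw [← hB₀] at hBd
    by_cases hvN : v ∈ nbhd G B₀
    · have h2 := hkey.2 hvN
      have hc : ((nbhd G B₀).erase v).card = (nbhd G B₀).card - 1 := card_erase_of_mem hvN
      have hpos : 1 ≤ (nbhd G B₀).card := card_pos.mpr ⟨v, hvN⟩
      unfold diff at h2
      omega
    · have h1 := hkey.1 hvN
      rw [erase_eq_of_notMem hvN] at hBd
      unfold diff at h1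
      omega
  have hK'le : diff (deleteVert G v) ((kerG G).subtype fun u => u ≠ v) ≤ dC (deleteVert G v) :=
    diff_le_dC _
  have hdc : dC (deleteVert G v) = dC G - 1 := by omega
  refine ⟨isCritIndep_of_dC_le hK'indep (by omega), hdc⟩

end CritGraph
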